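/- Let d ≥ 1 and N ≥ 1 be integers and let P(X) = a₀ + a₁X + ⋯ + a_{d−1}X^{d−1} be a polynomial in ℤ[X] of degree at most d−1. If X^d − 1 divides P(X)^N − 1 in ℤ[X], then P(X) = ± X^{k·d/d′} for some k ∈ {0, 1, …, d′−1}, where d′ = gcd(d, N). -/

import Mathlib

open Polynomial Finset Complex

lemma aux_sum_sq (d : ℕ) (b : ℕ → ℤ) (h : ∑ i ∈ Finset.range d, b i ^ 2 = 1) :
    ∃ m ∈ Finset.range d, b m ^ 2 = 1 ∧ ∀ j ∈ Finset.range d, j ≠ m → b j = 0 := by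
  have hne : ∃ m ∈ Finset.range d, b m ≠ 0 := by
    by_contra hc
    push_neg at hc
    rw [Finset.sum_eq_zero (fun i hi => by rw [hc i hi]; ring)] at h
    omega
  obtain ⟨m, hm, hbm⟩ := hne
  have h1 : 1 ≤ b m ^ 2 := by
    rcases hbm.lt_or_gt with h' | h' <;> nlinarith
  have hsplit : b m ^ 2 + ∑ j ∈ (Finset.range d).erase m, b j ^ 2 = 1 := by
    rw [Finset.add_sum_erase _ (fun i => b i ^ 2) hm]
    exact h
  have hnn : 0 ≤ ∑ j ∈ (Finset.range d).erase m, b j ^ 2 :=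
    Finset.sum_nonneg (fun j _ => sq_nonneg _)
  have hz : ∑ j ∈ (Finset.range d).erase m, b j ^ 2 = 0 := by omega
  have hall := (Finset.sum_eq_zero_iff_of_nonneg (fun j _ => sq_nonneg (b j))).mp hz
  refine ⟨m, hm, by omega, fun j hj hjm => ?_⟩
  have := hall j (Finset.mem_erase.mpr ⟨hjm, hj⟩)
  exact pow_eq_zero_iff (n := 2) (by norm_num) |>.mp this

lemma aux_gcd (d N m : ℕ) (hd : 1 ≤ d) (hN : 1 ≤ N) (hm : m < d) (hdvd : d ∣ m * N) :
    ∃ k < Nat.gcd d N, m = k * (d / Nat.gcd d N) := by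
  set g := Nat.gcd d N with hg
  have hg0 : 0 < g := Nat.gcd_pos_of_pos_left _ hd
  have hdg : g ∣ d := Nat.gcd_dvd_left d N
  have hNg : g ∣ N := Nat.gcd_dvd_right d N
  have hcop : Nat.Coprime (d / g) (N / g) := Nat.coprime_div_gcd_div_gcd hg0
  have hdvd1 : (d / g) ∣ m * (N / g) := by
    have h1 : g * (d / g) ∣ m * (g * (N / g)) := by
      rwa [Nat.mul_div_cancel' hdg, Nat.mul_div_cancel' hNg]
    rw [show m * (g * (N / g)) = g * (m * (N / g)) by ring] at h1
    exact (Nat.mul_dvd_mul_iff_left hg0).mp h1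
  have hdm : (d / g) ∣ m := hcop.dvd_of_dvd_mul_right hdvd1
  obtain ⟨k, hk⟩ := hdm
  refine ⟨k, ?_, by rw [hk]; ring⟩
  have hd1 : 0 < d / g := Nat.div_pos (Nat.le_of_dvd (by omega) hdg) hg0
  have : d = g * (d / g) := (Nat.mul_div_cancel' hdg).symm
  nlinarith [hm, hk]
lemma aux_parseval (d N : ℕ) (hd : 1 ≤ d) (hN : 1 ≤ N) (P : Polynomial ℤ)
    (hdeg : P.natDegree ≤ d - 1)
    (hdvd : (Polynomial.X ^ d - 1) ∣ (P ^ N - 1)) :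
    ∑ i ∈ Finset.range d, (P.coeff i) ^ 2 = 1 := by
  classical
  have hdd : P.natDegree < d := by omega
  set Q : Polynomial ℂ := P.map (Int.castRingHom ℂ) with hQ
  have hQdeg : Q.natDegree < d := lt_of_le_of_lt Polynomial.natDegree_map_le hdd
  have hμ : IsPrimitiveRoot (Complex.exp (2 * Real.pi * Complex.I / d)) d :=
    Complex.isPrimitiveRoot_exp d (by omega)
  set μ : ℂ := Complex.exp (2 * Real.pi * Complex.I / d) with hμdef
  set ν : ℂ := (starRingEnd ℂ) μ with hν
  set a : ℕ → ℂ := fun i => ((P.coeff i : ℤ) : ℂ) with ha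
  have hev : ∀ z : ℂ, z ^ d = 1 → (Q.eval z) ^ N = 1 := by
    intro z hz
    have h1 : (X ^ d - 1 : Polynomial ℂ) ∣ Q ^ N - 1 := by
      have := Polynomial.map_dvd (Int.castRingHom ℂ) hdvd
      simpa [Polynomial.map_sub, Polynomial.map_pow, Polynomial.map_one] using this
    have h2 := Polynomial.eval_dvd (p := X ^ d - 1) (q := Q ^ N - 1) (x := z) h1
    simp only [Polynomial.eval_sub, Polynomial.eval_pow, Polynomial.eval_X,
      Polynomial.eval_one, hz, sub_self, zero_dvd_iff, sub_eq_zero] at h2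
    exact h2
  have hevalsum : ∀ z : ℂ, Q.eval z = ∑ i ∈ Finset.range d, a i * z ^ i := by
    intro z
    rw [Polynomial.eval_eq_sum_range' hQdeg]
    exact Finset.sum_congr rfl fun i _ => by simp [hQ, ha]
  have hμν : μ * ν = 1 := by
    rw [hν, Complex.mul_conj]
    norm_cast
    have h1 : ‖μ‖ = 1 := Complex.norm_eq_one_of_pow_eq_one hμ.pow_eq_one (by omega)
    rw [Complex.normSq_eq_norm_sq, h1]; norm_num
  have hνd : ν ^ d = 1 := by
    rw [hν, ← map_pow, hμ.pow_eq_one, map_one]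
  have key : ∀ j : ℕ,
      (∑ i ∈ Finset.range d, a i * (μ ^ j) ^ i) *
        (∑ i ∈ Finset.range d, a i * (ν ^ j) ^ i) = 1 := by
    intro j
    have hz : (μ ^ j) ^ d = 1 := by rw [← pow_mul, mul_comm, pow_mul, hμ.pow_eq_one, one_pow]
    have hzN := hev (μ ^ j) hz
    have hnorm : ‖Q.eval (μ ^ j)‖ = 1 := Complex.norm_eq_one_of_pow_eq_one hzN (by omega)
    have hconj : (starRingEnd ℂ) (Q.eval (μ ^ j)) = ∑ i ∈ Finset.range d, a i * (ν ^ j) ^ i := by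
      rw [hevalsum, map_sum]
      refine Finset.sum_congr rfl fun i _ => ?_
      rw [map_mul, map_pow, map_pow]
      simp [ha, hν, map_intCast]
    rw [← hevalsum, ← hconj, Complex.mul_conj]
    norm_cast
    rw [Complex.normSq_eq_norm_sq, hnorm]; norm_num
  have hsum : (d : ℂ) = ∑ j ∈ Finset.range d,
      (∑ i ∈ Finset.range d, a i * (μ ^ j) ^ i) *
        (∑ i ∈ Finset.range d, a i * (ν ^ j) ^ i) := by
    rw [Finset.sum_congr rfl fun j _ => key j, Finset.sum_const, Finset.card_range,
      nsmul_eq_mul, mul_one]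
  have hexpand : ∀ j : ℕ,
      (∑ i ∈ Finset.range d, a i * (μ ^ j) ^ i) *
        (∑ i ∈ Finset.range d, a i * (ν ^ j) ^ i)
      = ∑ i ∈ Finset.range d, ∑ i' ∈ Finset.range d,
          (a i * a i') * (μ ^ i * ν ^ i') ^ j := by
    intro j
    rw [Finset.sum_mul_sum]
    refine Finset.sum_congr rfl fun i _ => Finset.sum_congr rfl fun i' _ => ?_
    rw [mul_pow, ← pow_mul, ← pow_mul, ← pow_mul, ← pow_mul, mul_comm j i, mul_comm j i']
    ring
  have hinner : ∀ i ∈ Finset.range d, ∀ i' ∈ Finset.range d,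
      (∑ j ∈ Finset.range d, (μ ^ i * ν ^ i') ^ j) = if i = i' then (d : ℂ) else 0 := by
    intro i hi i' hi'
    by_cases h : i = i'
    · subst h
      have : μ ^ i * ν ^ i = 1 := by rw [← mul_pow, hμν, one_pow]
      simp [this]
    · rw [if_neg h]
      have hwd : (μ ^ i * ν ^ i') ^ d = 1 := by
        rw [mul_pow, ← pow_mul, ← pow_mul, mul_comm i d, mul_comm i' d, pow_mul, pow_mul,
          hμ.pow_eq_one, hνd, one_pow, one_pow, one_mul]
      have hw1 : μ ^ i * ν ^ i' ≠ 1 := by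
        intro hc
        have hinv : μ ^ i' * ν ^ i' = 1 := by rw [← mul_pow, hμν, one_pow]
        have : μ ^ i = μ ^ i' := by
          have h1 : μ ^ i * ν ^ i' = μ ^ i' * ν ^ i' := by rw [hc, hinv]
          have hν0 : ν ^ i' ≠ 0 := by
            intro h0
            rw [h0, mul_zero] at hinv
            exact one_ne_zero hinv.symm
          exact mul_right_cancel₀ hν0 h1
        exact h (hμ.pow_inj (Finset.mem_range.mp hi) (Finset.mem_range.mp hi') this)
      rw [geom_sum_eq hw1, hwd, sub_self, zero_div]
  have hfinal : (d : ℂ) = (d : ℂ) * ∑ i ∈ Finset.range d, a i ^ 2 := by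
    calc (d : ℂ) = ∑ j ∈ Finset.range d, ∑ i ∈ Finset.range d, ∑ i' ∈ Finset.range d,
          (a i * a i') * (μ ^ i * ν ^ i') ^ j := by
          rw [hsum]; exact Finset.sum_congr rfl fun j _ => hexpand j
      _ = ∑ i ∈ Finset.range d, ∑ i' ∈ Finset.range d, (a i * a i') *
          ∑ j ∈ Finset.range d, (μ ^ i * ν ^ i') ^ j := by
          rw [Finset.sum_comm]
          refine Finset.sum_congr rfl fun i _ => ?_
          rw [Finset.sum_comm]
          exact Finset.sum_congr rfl fun i' _ => (Finset.mul_sum _ _ _).symm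
      _ = ∑ i ∈ Finset.range d, (a i * a i) * (d : ℂ) := by
          refine Finset.sum_congr rfl fun i hi => ?_
          rw [Finset.sum_congr rfl fun i' hi' => by rw [hinner i hi i' hi', mul_ite, mul_zero]]
          rw [Finset.sum_ite_eq (Finset.range d) i (fun i' => a i * a i' * (d:ℂ)), if_pos hi]
      _ = (d : ℂ) * ∑ i ∈ Finset.range d, a i ^ 2 := by
          rw [Finset.mul_sum]
          exact Finset.sum_congr rfl fun i _ => by ring
  have hd0 : (d : ℂ) ≠ 0 := Nat.cast_ne_zero.mpr (by omega)
  have hsq : ∑ i ∈ Finset.range d, a i ^ 2 = 1 := by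
    have h' : (d : ℂ) * ∑ i ∈ Finset.range d, a i ^ 2 = (d : ℂ) * 1 := by
      rw [mul_one, ← hfinal]
    exact mul_left_cancel₀ hd0 h'
  have := hsq
  rw [ha] at this
  push_cast at this
  exact_mod_cast this


theorem stmt_0 (d N : ℕ) (hd : 1 ≤ d) (hN : 1 ≤ N) (P : Polynomial ℤ)
    (hdeg : P.natDegree ≤ d - 1)
    (hdvd : (Polynomial.X ^ d - 1) ∣ (P ^ N - 1)) :
    ∃ k < Nat.gcd d N,
      P = Polynomial.X ^ (k * (d / Nat.gcd d N)) ∨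
      P = -Polynomial.X ^ (k * (d / Nat.gcd d N)) := by
  classical
  have hsq := aux_parseval d N hd hN P hdeg hdvd
  obtain ⟨m, hm, hcm, hzero⟩ := aux_sum_sq d _ hsq
  have hmd : m < d := Finset.mem_range.mp hm
  set c : ℤ := P.coeff m with hc
  -- P = C c * X ^ m
  have hP : P = Polynomial.C c * Polynomial.X ^ m := by
    ext n
    rw [Polynomial.coeff_C_mul, Polynomial.coeff_X_pow]
    by_cases hn : n = m
    · subst hn; simp [hc]
    · rw [if_neg hn, mul_zero]
      by_cases hnd : n < d
      · exact hzero n (Finset.mem_range.mpr hnd) hn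
      · exact Polynomial.coeff_eq_zero_of_natDegree_lt (by omega)
  -- c = 1 or c = -1
  have hcc : c = 1 ∨ c = -1 := by
    have h1 : (c - 1) * (c + 1) = 0 := by nlinarith [hcm]
    rcases mul_eq_zero.mp h1 with h | h
    · left; omega
    · right; omega
  -- c ^ N = 1 by evaluating at 1
  have hcN : c ^ N = 1 := by
    have h2 := Polynomial.eval_dvd (p := Polynomial.X ^ d - 1) (q := P ^ N - 1) (x := (1 : ℤ)) hdvd
    simp only [Polynomial.eval_sub, Polynomial.eval_pow, Polynomial.eval_X,
      Polynomial.eval_one, one_pow, sub_self, zero_dvd_iff, sub_eq_zero] at h2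
    rw [hP] at h2
    simpa using h2
  -- d ∣ m * N via the primitive root
  have hμ : IsPrimitiveRoot (Complex.exp (2 * Real.pi * Complex.I / d)) d :=
    Complex.isPrimitiveRoot_exp d (by omega)
  set μ : ℂ := Complex.exp (2 * Real.pi * Complex.I / d) with hμdef
  have hdvdmN : d ∣ m * N := by
    have h1 : (Polynomial.X ^ d - 1 : Polynomial ℂ) ∣
        (P.map (Int.castRingHom ℂ)) ^ N - 1 := by
      have := Polynomial.map_dvd (Int.castRingHom ℂ) hdvd
      simpa [Polynomial.map_sub, Polynomial.map_pow, Polynomial.map_one] using this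
    have h2 := Polynomial.eval_dvd (x := μ) h1
    simp only [Polynomial.eval_sub, Polynomial.eval_pow, Polynomial.eval_X,
      Polynomial.eval_one, hμ.pow_eq_one, sub_self, zero_dvd_iff, sub_eq_zero] at h2
    rw [hP] at h2
    simp only [Polynomial.map_mul, Polynomial.map_C, Polynomial.map_pow, Polynomial.map_X,
      Polynomial.eval_mul, Polynomial.eval_C, Polynomial.eval_pow, Polynomial.eval_X,
      mul_pow, ← pow_mul, eq_intCast, Polynomial.map_intCast, Polynomial.eval_intCast] at h2
    have hcNC : ((c : ℂ)) ^ N = 1 := by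
      rw [← Int.cast_pow, hcN, Int.cast_one]
    rw [hcNC, one_mul] at h2
    exact (hμ.pow_eq_one_iff_dvd (m * N)).mp h2
  obtain ⟨k, hk, hmk⟩ := aux_gcd d N m hd hN hmd hdvdmN
  refine ⟨k, hk, ?_⟩
  rcases hcc with h | h
  · left; rw [hP, h, map_one, one_mul, hmk]
  · right; rw [hP, h, hmk, map_neg, map_one, neg_mul, one_mul]
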